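/- Let μ be a finite measure on a Polish space E, written μ = λ μ' with λ ≥ 0 and μ' a probability measure. Let (X_i)_{i≥1} be i.i.d. with law μ', let N be an independent Poisson random variable with mean λ, and set ν := Σ_{i=1}^N δ_{X_i}. Then for every Borel measurable f : E → [0,1], E[ Π_{i=1}^N (1 - f(X_i)) ] = exp( - ∫ f dμ ). -/

import Mathlib

open MeasureTheory ProbabilityTheory

/-- Poissonization: if `ν = Σ_{i=1}^N δ_{X_i}` with `(X_i)` i.i.d. with law `μ'` and `N`
an independent Poisson(λ) variable, then `E[(1-f)^ν] = exp(-∫ f d(λμ'))` for every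
measurable `f : E → [0,1]`. -/
theorem stmt17 {E Ω : Type*} [MeasurableSpace E] [MeasurableSpace Ω]
    (P : Measure Ω) [IsProbabilityMeasure P]
    (lam : ℝ) (hlam : 0 ≤ lam) (μ' : Measure E) [IsProbabilityMeasure μ']
    (X : ℕ → Ω → E) (hXmeas : ∀ i, Measurable (X i))
    (hXlaw : ∀ i, P.map (X i) = μ')
    (hXindep : iIndepFun X P)
    (N : Ω → ℕ) (hNmeas : Measurable N)
    (hNlaw : ∀ k : ℕ,
      P {ω | N ω = k} = ENNReal.ofReal (Real.exp (-lam) * lam ^ k / (Nat.factorial k)))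
    (hNindep : IndepFun N (fun ω i => X i ω) P) :
    ∀ f : E → ℝ, Measurable f → (∀ y, f y ∈ Set.Icc (0 : ℝ) 1) →
      ∫ ω, ∏ i ∈ Finset.range (N ω), (1 - f (X i ω)) ∂P
        = Real.exp (-(lam * ∫ y, f y ∂μ')) := by
  intro f hf hf01
  classical
  set m := ∫ y, f y ∂μ' with hm
  have hfint : Integrable f μ' :=
    ⟨hf.aestronglyMeasurable, HasFiniteIntegral.of_bounded (C := 1)
      (ae_of_all _ fun y => by
        rw [Real.norm_eq_abs, abs_of_nonneg (hf01 y).1]; exact (hf01 y).2)⟩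
  -- the individual factors
  have hgmeas : ∀ i, Measurable (fun ω => 1 - f (X i ω)) := fun i =>
    measurable_const.sub (hf.comp (hXmeas i))
  have hg01 : ∀ i ω, (1 - f (X i ω)) ∈ Set.Icc (0:ℝ) 1 := fun i ω =>
    ⟨by linarith [(hf01 (X i ω)).2], by linarith [(hf01 (X i ω)).1]⟩
  have hgindep : iIndepFun (fun i ω => 1 - f (X i ω)) P :=
    hXindep.comp (fun _ => fun x => 1 - f x) (fun _ => measurable_const.sub hf)
  have hgint : ∀ i, ∫ ω, (1 - f (X i ω)) ∂P = 1 - m := by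
    intro i
    have hcomp : ∫ ω, f (X i ω) ∂P = m := by
      rw [hm, ← hXlaw i, integral_map (hXmeas i).aemeasurable hf.aestronglyMeasurable]
    have hfXint : Integrable (fun ω => f (X i ω)) P :=
      ⟨(hf.comp (hXmeas i)).aestronglyMeasurable,
        HasFiniteIntegral.of_bounded (C := 1) (ae_of_all _ fun ω => by
          rw [Real.norm_eq_abs, abs_of_nonneg (hf01 _).1]; exact (hf01 _).2)⟩
    rw [integral_sub (integrable_const 1) hfXint, integral_const, hcomp]
    simp
  -- product over `range k`
  have hprodmeas : ∀ k, Measurable (fun ω => ∏ i ∈ Finset.range k, (1 - f (X i ω))) := fun k =>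
    Finset.measurable_prod _ fun i _ => hgmeas i
  have hprod : ∀ k, ∫ ω, ∏ i ∈ Finset.range k, (1 - f (X i ω)) ∂P = (1 - m)^k := by
    intro k
    induction k with
    | zero => simp
    | succ k ih =>
      have hPeq : (∏ j ∈ Finset.range k, fun ω => 1 - f (X j ω))
          = fun ω => ∏ j ∈ Finset.range k, (1 - f (X j ω)) :=
        funext fun ω => Finset.prod_apply _ _ _
      have hind : IndepFun (∏ j ∈ Finset.range k, fun ω => 1 - f (X j ω))
          (fun ω => 1 - f (X k ω)) P :=
        hgindep.indepFun_prod_range_succ hgmeas k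
      have hmul := hind.integral_mul_eq_mul_integral
        (by rw [hPeq]; exact (hprodmeas k).aestronglyMeasurable)
        (hgmeas k).aestronglyMeasurable
      calc ∫ ω, ∏ i ∈ Finset.range (k+1), (1 - f (X i ω)) ∂P
          = ∫ ω, ((∏ j ∈ Finset.range k, fun ω => 1 - f (X j ω)) * fun ω => 1 - f (X k ω)) ω ∂P := by
            refine integral_congr_ae (ae_of_all _ fun ω => ?_)
            simp [Finset.prod_range_succ, Finset.prod_apply]
        _ = (∫ ω, (∏ j ∈ Finset.range k, fun ω => 1 - f (X j ω)) ω ∂P)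
              * ∫ ω, (1 - f (X k ω)) ∂P := hmul
        _ = (1-m)^k * (1-m) := by
            rw [hgint k]; congr 1; rw [← ih]
            exact integral_congr_ae (ae_of_all _ fun ω => by rw [hPeq])
        _ = (1-m)^(k+1) := by ring
  -- the full integrand
  have hGmeas : Measurable (fun ω => ∏ i ∈ Finset.range (N ω), (1 - f (X i ω))) := by
    have h1 : Measurable (fun p : Ω × ℕ => ∏ i ∈ Finset.range p.2, (1 - f (X i p.1))) :=
      measurable_from_prod_countable_left fun k => hprodmeas k
    exact h1.comp (measurable_id.prodMk hNmeas)
  have hG01 : ∀ ω, (∏ i ∈ Finset.range (N ω), (1 - f (X i ω))) ∈ Set.Icc (0:ℝ) 1 := fun ω =>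
    ⟨Finset.prod_nonneg fun i _ => (hg01 i ω).1,
     Finset.prod_le_one (fun i _ => (hg01 i ω).1) (fun i _ => (hg01 i ω).2)⟩
  have hGint : Integrable (fun ω => ∏ i ∈ Finset.range (N ω), (1 - f (X i ω))) P :=
    ⟨hGmeas.aestronglyMeasurable, HasFiniteIntegral.of_bounded (C := 1)
      (ae_of_all _ fun ω => by
        rw [Real.norm_eq_abs, abs_of_nonneg (hG01 ω).1]; exact (hG01 ω).2)⟩
  -- partition by the value of N
  have hs : ∀ k : ℕ, MeasurableSet (N ⁻¹' {k}) := fun k => hNmeas (measurableSet_singleton k)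
  have hdisj : Pairwise (Function.onFun Disjoint fun k => N ⁻¹' {k}) := by
    intro i j hij
    refine Set.disjoint_left.2 fun ω hi hj => hij ?_
    simp only [Set.mem_preimage, Set.mem_singleton_iff] at hi hj
    rw [← hi, ← hj]
  have hUnion : (⋃ k, N ⁻¹' {k}) = Set.univ := by ext ω; simp
  have hstep1 : ∫ ω, ∏ i ∈ Finset.range (N ω), (1 - f (X i ω)) ∂P
      = ∑' k : ℕ, ∫ ω in N ⁻¹' {k}, ∏ i ∈ Finset.range (N ω), (1 - f (X i ω)) ∂P := by
    rw [← setIntegral_univ, ← hUnion,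
      integral_iUnion hs hdisj (by rw [hUnion]; exact hGint.integrableOn)]
  -- compute the integral on each piece
  have hset : ∀ k : ℕ, ∫ ω in N ⁻¹' {k}, ∏ i ∈ Finset.range (N ω), (1 - f (X i ω)) ∂P
      = (Real.exp (-lam) * lam ^ k / (Nat.factorial k)) * (1 - m)^k := by
    intro k
    have h1 : ∫ ω in N ⁻¹' {k}, ∏ i ∈ Finset.range (N ω), (1 - f (X i ω)) ∂P
        = ∫ ω in N ⁻¹' {k}, ∏ i ∈ Finset.range k, (1 - f (X i ω)) ∂P := by
      refine setIntegral_congr_fun (hs k) fun ω hω => ?_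
      simp only [Set.mem_preimage, Set.mem_singleton_iff] at hω
      rw [hω]
    have h2 : ∫ ω in N ⁻¹' {k}, ∏ i ∈ Finset.range k, (1 - f (X i ω)) ∂P
        = ∫ ω, (if N ω = k then (1:ℝ) else 0) * ∏ i ∈ Finset.range k, (1 - f (X i ω)) ∂P := by
      rw [← integral_indicator (hs k)]
      refine integral_congr_ae (ae_of_all _ fun ω => ?_)
      by_cases hω : N ω = k <;> simp [Set.indicator, hω]
    have hφ : Measurable (fun n : ℕ => if n = k then (1:ℝ) else 0) := measurable_from_top
    have hψ : Measurable (fun v : ℕ → E => ∏ i ∈ Finset.range k, (1 - f (v i))) :=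
      Finset.measurable_prod _ fun i _ => measurable_const.sub (hf.comp (measurable_pi_apply i))
    have hind2 : IndepFun (fun ω => if N ω = k then (1:ℝ) else 0)
        (fun ω => ∏ i ∈ Finset.range k, (1 - f (X i ω))) P := hNindep.comp hφ hψ
    have h3 : ∫ ω, (if N ω = k then (1:ℝ) else 0) * ∏ i ∈ Finset.range k, (1 - f (X i ω)) ∂P
        = (∫ ω, (if N ω = k then (1:ℝ) else 0) ∂P)
            * ∫ ω, ∏ i ∈ Finset.range k, (1 - f (X i ω)) ∂P :=
      hind2.integral_fun_mul_eq_mul_integral (hφ.comp hNmeas).aestronglyMeasurable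
        (hprodmeas k).aestronglyMeasurable
    have h4 : ∫ ω, (if N ω = k then (1:ℝ) else 0) ∂P
        = Real.exp (-lam) * lam ^ k / (Nat.factorial k) := by
      have he : (fun ω => if N ω = k then (1:ℝ) else 0)
          = Set.indicator (N ⁻¹' {k}) (fun _ => (1:ℝ)) := by
        funext ω
        by_cases hω : N ω = k <;> simp [Set.indicator, hω]
      have hsets : N ⁻¹' {k} = {ω | N ω = k} := by ext ω; simp
      rw [he, integral_indicator_const (1:ℝ) (hs k), hsets, measureReal_def, hNlaw k, smul_eq_mul, mul_one,
        ENNReal.toReal_ofReal]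
      positivity
    rw [h1, h2, h3, h4, hprod k]
  -- final summation
  rw [hstep1, tsum_congr hset]
  have h1 : ∀ k : ℕ, (Real.exp (-lam) * lam ^ k / (Nat.factorial k)) * (1-m)^k
      = Real.exp (-lam) * ((lam * (1-m))^k / (Nat.factorial k)) := by
    intro k; rw [mul_pow]; ring
  rw [tsum_congr h1, tsum_mul_left]
  have h2 : ∑' k : ℕ, (lam * (1-m))^k / (Nat.factorial k) = Real.exp (lam * (1-m)) := by
    rw [Real.exp_eq_exp_ℝ, NormedSpace.exp_eq_tsum_div]
  rw [h2, ← Real.exp_add]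
  ring_nf
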